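/- Let Z be an abelian group, let N be a positive integer, let A, B be finite subsets of Z with #A ≤ N and #B ≤ N, and let G ⊆ A × B with #C ≤ N where C = {a + b : (a,b) ∈ G}. Define V = {(a,b,b') : (a,b), (a,b') ∈ G} and let S be the set of quadruples (v_0, v_1, v_2, v_3) ∈ V^4, with v_i = (a_i, b_i, b'_i), satisfying a_0 + b_0 = a_1 + b_1, a_0 + b'_0 = a_1 + b'_1, b_1 = b_2, b'_1 = b'_2, a_2 + b_2 = a_3 + b_3, and b'_2 = b'_3. Then #S · N^6 ≥ (#V)^4. -/

import Mathlib

open Finset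

private lemma sum_inv_fiber_card {α β : Type*} [DecidableEq β]
    (s : Finset α) (φ : α → β) :
    ∑ v ∈ s, ((1 : ℝ) / ((s.filter fun w => φ w = φ v).card)) = ((s.image φ).card : ℝ) := by
  rw [← Finset.sum_fiberwise_of_maps_to (fun x hx => Finset.mem_image_of_mem φ hx)
      (fun v => (1 : ℝ) / ((s.filter fun w => φ w = φ v).card))]
  have hinner : ∀ y ∈ s.image φ,
      (∑ v ∈ s.filter (fun v => φ v = y),
        ((1 : ℝ) / ((s.filter fun w => φ w = φ v).card))) = 1 := by
    intro y hy
    obtain ⟨x, hx, rfl⟩ := Finset.mem_image.mp hy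
    have hcong : ∀ v ∈ s.filter (fun v => φ v = φ x),
        ((1:ℝ) / ((s.filter fun w => φ w = φ v).card))
          = (1:ℝ) / ((s.filter fun w => φ w = φ x).card) := by
      intro v hv
      rw [(Finset.mem_filter.mp hv).2]
    rw [Finset.sum_congr rfl hcong, Finset.sum_const, nsmul_eq_mul]
    have hpos : (0:ℝ) < ((s.filter fun w => φ w = φ x).card : ℝ) := by
      have hx' : x ∈ s.filter fun w => φ w = φ x := Finset.mem_filter.mpr ⟨hx, rfl⟩
      exact_mod_cast Finset.card_pos.mpr ⟨x, hx'⟩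
    rw [mul_one_div, div_self (ne_of_gt hpos)]
  rw [Finset.sum_congr rfl hinner, Finset.sum_const, nsmul_eq_mul, mul_one]

private lemma sqrt_mul_le_half_add {a b : ℝ} (ha : 0 ≤ a) (hb : 0 ≤ b) :
    Real.sqrt (a * b) ≤ (a + b) / 2 := by
  rw [Real.sqrt_mul ha]
  nlinarith [Real.sq_sqrt ha, Real.sq_sqrt hb, sq_nonneg (Real.sqrt a - Real.sqrt b),
    Real.sqrt_nonneg a, Real.sqrt_nonneg b]


private lemma stepA {α : Type*} (s : Finset α) (f g : α → ℕ)
    (hf : ∀ v ∈ s, 0 < f v) (hg : ∀ v ∈ s, 0 < g v) :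
    ((s.card : ℝ))^2 ≤ (∑ v ∈ s, Real.sqrt ((f v : ℝ) * (g v : ℝ)))
      * (∑ v ∈ s, 1 / Real.sqrt ((f v : ℝ) * (g v : ℝ))) := by
  have h := Finset.sum_sq_le_sum_mul_sum_of_sq_eq_mul s
    (r := fun _ => (1:ℝ))
    (f := fun v => Real.sqrt ((f v : ℝ) * (g v : ℝ)))
    (g := fun v => 1 / Real.sqrt ((f v : ℝ) * (g v : ℝ)))
    (fun i _ => Real.sqrt_nonneg _)
    (fun i _ => by positivity)
    (fun i hi => by
      have hpos : (0:ℝ) < (f i : ℝ) * (g i : ℝ) :=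
        mul_pos (by exact_mod_cast hf i hi) (by exact_mod_cast hg i hi)
      have hs : (0:ℝ) < Real.sqrt ((f i : ℝ) * (g i : ℝ)) := Real.sqrt_pos.mpr hpos
      rw [one_pow, mul_one_div, div_self (ne_of_gt hs)])
  simpa using h

private lemma stepInner {α : Type*} (s : Finset α) (f g : α → ℕ) :
    ∑ v ∈ s, Real.sqrt ((f v : ℝ) * (g v : ℝ))
      ≤ Real.sqrt (∑ v ∈ s, (f v : ℝ)) * Real.sqrt (∑ v ∈ s, (g v : ℝ)) := by
  have hsp : ∀ v ∈ s, Real.sqrt ((f v : ℝ) * (g v : ℝ))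
      = Real.sqrt (f v : ℝ) * Real.sqrt (g v : ℝ) := fun v _ =>
    Real.sqrt_mul (by positivity) _
  rw [Finset.sum_congr rfl hsp]
  exact Real.sum_sqrt_mul_sqrt_le _ (f := fun v => (f v : ℝ)) (g := fun v => (g v : ℝ))
    (fun i => by positivity) (fun i => by positivity)

private lemma stepOuter {α : Type*} (s : Finset α) (X Y : α → ℝ)
    (hX : ∀ i, 0 ≤ X i) (hY : ∀ i, 0 ≤ Y i) :
    (∑ i ∈ s, Real.sqrt (X i) * Real.sqrt (Y i))^2 ≤ (∑ i ∈ s, X i * Y i) * s.card := by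
  have h := Finset.sum_sq_le_sum_mul_sum_of_sq_eq_mul s
    (r := fun i => Real.sqrt (X i) * Real.sqrt (Y i))
    (f := fun i => X i * Y i)
    (g := fun _ => (1:ℝ))
    (fun i _ => mul_nonneg (hX i) (hY i))
    (fun i _ => zero_le_one)
    (fun i _ => by rw [mul_pow, Real.sq_sqrt (hX i), Real.sq_sqrt (hY i), mul_one])
  simpa using h

private lemma inv_sqrt_le_half {a b : ℕ} (ha : 0 < a) (hb : 0 < b) :
    1 / Real.sqrt ((a : ℝ) * (b : ℝ)) ≤ ((1:ℝ) / (a : ℝ) + (1:ℝ) / (b : ℝ)) / 2 := by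
  have ha' : (0:ℝ) < (a : ℝ) := by exact_mod_cast ha
  have hb' : (0:ℝ) < (b : ℝ) := by exact_mod_cast hb
  have key : 1 / Real.sqrt ((a : ℝ) * (b : ℝ))
      = Real.sqrt ((1 / (a : ℝ)) * (1 / (b : ℝ))) := by
    rw [one_div, ← Real.sqrt_inv, mul_inv, ← one_div, ← one_div]
  rw [key]
  exact sqrt_mul_le_half_add (by positivity) (by positivity)

/-- **Katz–Tao, inequality (14): `#S ≥ (#V)⁴ / N⁶`.**  Let `Z` be an abelian group,
`N` a positive integer, `A, B` finite subsets of `Z` with `#A ≤ N`, `#B ≤ N`, and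
`G ⊆ A × B` with `#C ≤ N` where `C = {a + b : (a,b) ∈ G}`.  Let
`V = {(a,b,b') : (a,b), (a,b') ∈ G}` and `S` the set of quadruples
`(v₀,v₁,v₂,v₃) ∈ V⁴`, `vᵢ = (aᵢ,bᵢ,b'ᵢ)`, with `a₀+b₀ = a₁+b₁`, `a₀+b'₀ = a₁+b'₁`,
`b₁ = b₂`, `b'₁ = b'₂`, `a₂+b₂ = a₃+b₃`, `b'₂ = b'₃`.  Then `#S · N⁶ ≥ (#V)⁴`. -/
theorem S_card_lower_bound {Z : Type*} [AddCommGroup Z] [DecidableEq Z]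
    (N : ℕ) (hN : 0 < N) (A B : Finset Z) (hA : A.card ≤ N) (hB : B.card ≤ N)
    (G : Finset (Z × Z)) (hG : G ⊆ A ×ˢ B)
    (hC : (G.image (fun p => p.1 + p.2)).card ≤ N)
    (V : Finset (Z × Z × Z))
    (hV : V = (A ×ˢ B ×ˢ B).filter (fun v => (v.1, v.2.1) ∈ G ∧ (v.1, v.2.2) ∈ G))
    (S : Finset ((Z × Z × Z) × (Z × Z × Z) × (Z × Z × Z) × (Z × Z × Z)))
    (hS : S = (V ×ˢ V ×ˢ V ×ˢ V).filter (fun q =>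
      q.1.1 + q.1.2.1 = q.2.1.1 + q.2.1.2.1 ∧
      q.1.1 + q.1.2.2 = q.2.1.1 + q.2.1.2.2 ∧
      q.2.1.2.1 = q.2.2.1.2.1 ∧
      q.2.1.2.2 = q.2.2.1.2.2 ∧
      q.2.2.1.1 + q.2.2.1.2.1 = q.2.2.2.1 + q.2.2.2.2.1 ∧
      q.2.2.1.2.2 = q.2.2.2.2.2)) :
    V.card ^ 4 ≤ S.card * N ^ 6 := by
  classical
  set C : Finset Z := G.image (fun p => p.1 + p.2) with hCdef
  set g1 : Z × Z × Z → Z × Z := fun v => (v.1 + v.2.1, v.1 + v.2.2) with hg1def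
  set g3 : Z × Z × Z → Z × Z := fun v => (v.1 + v.2.1, v.2.2) with hg3def
  set n1 : Z × Z × Z → ℕ := fun v => (V.filter fun w => g1 w = g1 v).card with hn1def
  set n3 : Z × Z × Z → ℕ := fun v => (V.filter fun w => g3 w = g3 v).card with hn3def
  -- membership facts
  have hVmem : ∀ v ∈ V, (v.1, v.2.1) ∈ G ∧ (v.1, v.2.2) ∈ G := by
    intro v hv; rw [hV] at hv; exact (Finset.mem_filter.mp hv).2
  have hVB : ∀ v ∈ V, v.2 ∈ B ×ˢ B := by
    intro v hv
    rw [hV] at hv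
    have h := (Finset.mem_filter.mp hv).1
    rw [Finset.mem_product] at h
    exact h.2
  have hg1C : ∀ v ∈ V, g1 v ∈ C ×ˢ C := by
    intro v hv
    obtain ⟨h1, h2⟩ := hVmem v hv
    rw [Finset.mem_product]
    exact ⟨Finset.mem_image.mpr ⟨_, h1, rfl⟩, Finset.mem_image.mpr ⟨_, h2, rfl⟩⟩
  have hg3C : ∀ v ∈ V, g3 v ∈ C ×ˢ B := by
    intro v hv
    obtain ⟨h1, _⟩ := hVmem v hv
    have hB2 := hVB v hv
    rw [Finset.mem_product] at hB2 ⊢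
    exact ⟨Finset.mem_image.mpr ⟨_, h1, rfl⟩, hB2.2⟩
  -- V membership of quadruple components of S, and conditions
  have hSmem : ∀ q ∈ S, (q.1 ∈ V ∧ q.2.1 ∈ V ∧ q.2.2.1 ∈ V ∧ q.2.2.2 ∈ V) ∧
      (q.1.1 + q.1.2.1 = q.2.1.1 + q.2.1.2.1 ∧
      q.1.1 + q.1.2.2 = q.2.1.1 + q.2.1.2.2 ∧
      q.2.1.2.1 = q.2.2.1.2.1 ∧
      q.2.1.2.2 = q.2.2.1.2.2 ∧
      q.2.2.1.1 + q.2.2.1.2.1 = q.2.2.2.1 + q.2.2.2.2.1 ∧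
      q.2.2.1.2.2 = q.2.2.2.2.2) := by
    intro q hq
    rw [hS, Finset.mem_filter] at hq
    obtain ⟨hmem, hc⟩ := hq
    simp only [Finset.mem_product] at hmem
    exact ⟨⟨hmem.1, hmem.2.1, hmem.2.2.1, hmem.2.2.2⟩, hc⟩
  -- the middle pair set
  set T : Finset ((Z × Z × Z) × (Z × Z × Z)) :=
    (V ×ˢ V).filter (fun w => w.1.2 = w.2.2) with hTdef
  have hStoT : ∀ q ∈ S, ((q.2.1, q.2.2.1) : (Z × Z × Z) × (Z × Z × Z)) ∈ T := by
    intro q hq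
    obtain ⟨⟨_, h1, h2, _⟩, hc⟩ := hSmem q hq
    rw [hTdef, Finset.mem_filter, Finset.mem_product]
    refine ⟨⟨h1, h2⟩, ?_⟩
    exact Prod.ext hc.2.2.1 hc.2.2.2.1
  -- S.card as a sum over T
  have hST : S.card = ∑ w ∈ T, n1 w.1 * n3 w.2 := by
    rw [Finset.card_eq_sum_card_fiberwise hStoT]
    refine Finset.sum_congr rfl fun w hw => ?_
    have hwT : w.1 ∈ V ∧ w.2 ∈ V ∧ w.1.2 = w.2.2 := by
      rw [hTdef, Finset.mem_filter, Finset.mem_product] at hw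
      exact ⟨hw.1.1, hw.1.2, hw.2⟩
    have hcard : (S.filter fun q => ((q.2.1, q.2.2.1) : (Z × Z × Z) × (Z × Z × Z)) = w).card
        = ((V.filter fun x => g1 x = g1 w.1) ×ˢ (V.filter fun x => g3 x = g3 w.2)).card := by
      apply Finset.card_nbij' (fun q => (q.1, q.2.2.2)) (fun x => (x.1, w.1, w.2, x.2))
      · intro q hq
        rw [Finset.mem_coe, Finset.mem_filter] at hq
        obtain ⟨hqS, hqw⟩ := hq
        obtain ⟨⟨hv0, _, _, hv3⟩, hc⟩ := hSmem q hqS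
        obtain ⟨e1, e2⟩ := Prod.ext_iff.mp hqw
        rw [Finset.mem_coe, Finset.mem_product]
        constructor
        · rw [Finset.mem_filter]
          refine ⟨hv0, ?_⟩
          rw [← e1]
          exact Prod.ext hc.1 hc.2.1
        · rw [Finset.mem_filter]
          refine ⟨hv3, ?_⟩
          rw [← e2]
          exact Prod.ext hc.2.2.2.2.1.symm hc.2.2.2.2.2.symm
      · intro x hx
        rw [Finset.mem_coe, Finset.mem_product, Finset.mem_filter, Finset.mem_filter] at hx
        obtain ⟨⟨hx1V, hx1⟩, hx2V, hx2⟩ := hx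
        rw [Finset.mem_coe, Finset.mem_filter]
        constructor
        · rw [hS, Finset.mem_filter]
          constructor
          · simp only [Finset.mem_product]
            exact ⟨hx1V, hwT.1, hwT.2.1, hx2V⟩
          · obtain ⟨ha1, ha2⟩ := Prod.ext_iff.mp hx1
            obtain ⟨hb1, hb2⟩ := Prod.ext_iff.mp hwT.2.2
            obtain ⟨hc1, hc2⟩ := Prod.ext_iff.mp hx2
            exact ⟨ha1, ha2, hb1, hb2, hc1.symm, hc2.symm⟩
        · exact Prod.ext rfl rfl
      · intro q hq
        rw [Finset.mem_coe, Finset.mem_filter] at hq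
        obtain ⟨e1, e2⟩ := Prod.ext_iff.mp hq.2
        rw [← e1, ← e2]
      · intro x _
        rfl
    rw [hcard, Finset.card_product]
  -- regroup over (b, b') pairs
  have hTB : ∀ w ∈ T, w.1.2 ∈ B ×ˢ B := by
    intro w hw
    rw [hTdef, Finset.mem_filter, Finset.mem_product] at hw
    exact hVB w.1 hw.1.1
  have hS2 : S.card = ∑ pq ∈ B ×ˢ B,
      (∑ v ∈ V.filter (fun v => v.2 = pq), n1 v) *
      (∑ v ∈ V.filter (fun v => v.2 = pq), n3 v) := by
    rw [hST, ← Finset.sum_fiberwise_of_maps_to hTB (fun w => n1 w.1 * n3 w.2)]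
    refine Finset.sum_congr rfl fun pq _ => ?_
    have hsplit : T.filter (fun w => w.1.2 = pq)
        = (V.filter fun v => v.2 = pq) ×ˢ (V.filter fun v => v.2 = pq) := by
      ext w
      rw [Finset.mem_filter, hTdef, Finset.mem_filter, Finset.mem_product,
        Finset.mem_product, Finset.mem_filter, Finset.mem_filter]
      constructor
      · rintro ⟨⟨⟨h1, h2⟩, h3⟩, h4⟩
        exact ⟨⟨h1, h4⟩, h2, h3 ▸ h4⟩
      · rintro ⟨⟨h1, h2⟩, h3, h4⟩
        exact ⟨⟨⟨h1, h3⟩, h2.trans h4.symm⟩, h2⟩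
    rw [hsplit, Finset.sum_product, ← Finset.sum_mul_sum]
  -- positivity of fibers
  have hn1pos : ∀ v ∈ V, 0 < n1 v := by
    intro v hv
    exact Finset.card_pos.mpr ⟨v, Finset.mem_filter.mpr ⟨hv, rfl⟩⟩
  have hn3pos : ∀ v ∈ V, 0 < n3 v := by
    intro v hv
    exact Finset.card_pos.mpr ⟨v, Finset.mem_filter.mpr ⟨hv, rfl⟩⟩
  -- real quantities
  set Q : ℝ := ∑ v ∈ V, Real.sqrt ((n1 v : ℝ) * (n3 v : ℝ)) with hQdef
  set I : ℝ := ∑ v ∈ V, 1 / Real.sqrt ((n1 v : ℝ) * (n3 v : ℝ)) with hIdef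
  -- Step A : (#V)² ≤ Q * I
  have hA2 : ((V.card : ℝ))^2 ≤ Q * I := by
    rw [hQdef, hIdef]
    exact stepA V n1 n3 hn1pos hn3pos
  -- Step B : I ≤ N²
  have hinv1 : ∑ v ∈ V, (1:ℝ) / (n1 v : ℝ) ≤ (N:ℝ)^2 := by
    have heq : ∑ v ∈ V, (1:ℝ) / (n1 v : ℝ) = ((V.image g1).card : ℝ) := by
      rw [hn1def]
      exact sum_inv_fiber_card V g1
    rw [heq]
    have hsub : V.image g1 ⊆ C ×ˢ C := by
      intro y hy
      obtain ⟨v, hv, rfl⟩ := Finset.mem_image.mp hy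
      exact hg1C v hv
    have h1 : (V.image g1).card ≤ N * N := by
      calc (V.image g1).card ≤ (C ×ˢ C).card := Finset.card_le_card hsub
        _ = C.card * C.card := Finset.card_product _ _
        _ ≤ N * N := Nat.mul_le_mul hC hC
    calc ((V.image g1).card : ℝ) ≤ ((N * N : ℕ) : ℝ) := by exact_mod_cast h1
      _ = (N:ℝ)^2 := by push_cast; ring
  have hinv3 : ∑ v ∈ V, (1:ℝ) / (n3 v : ℝ) ≤ (N:ℝ)^2 := by
    have heq : ∑ v ∈ V, (1:ℝ) / (n3 v : ℝ) = ((V.image g3).card : ℝ) := by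
      rw [hn3def]
      exact sum_inv_fiber_card V g3
    rw [heq]
    have hsub : V.image g3 ⊆ C ×ˢ B := by
      intro y hy
      obtain ⟨v, hv, rfl⟩ := Finset.mem_image.mp hy
      exact hg3C v hv
    have h1 : (V.image g3).card ≤ N * N := by
      calc (V.image g3).card ≤ (C ×ˢ B).card := Finset.card_le_card hsub
        _ = C.card * B.card := Finset.card_product _ _
        _ ≤ N * N := Nat.mul_le_mul hC hB
    calc ((V.image g3).card : ℝ) ≤ ((N * N : ℕ) : ℝ) := by exact_mod_cast h1
      _ = (N:ℝ)^2 := by push_cast; ring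
  have hBineq : I ≤ (N:ℝ)^2 := by
    have hpt : ∀ v ∈ V, 1 / Real.sqrt ((n1 v : ℝ) * (n3 v : ℝ))
        ≤ ((1:ℝ) / (n1 v : ℝ) + (1:ℝ) / (n3 v : ℝ)) / 2 := fun v hv =>
      inv_sqrt_le_half (hn1pos v hv) (hn3pos v hv)
    rw [hIdef]
    calc (∑ v ∈ V, 1 / Real.sqrt ((n1 v : ℝ) * (n3 v : ℝ))) ≤ ∑ v ∈ V, ((1:ℝ) / (n1 v : ℝ) + (1:ℝ) / (n3 v : ℝ)) / 2 :=
          Finset.sum_le_sum hpt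
      _ = ((∑ v ∈ V, (1:ℝ) / (n1 v : ℝ)) + ∑ v ∈ V, (1:ℝ) / (n3 v : ℝ)) / 2 := by
          rw [← Finset.sum_add_distrib, ← Finset.sum_div]
      _ ≤ ((N:ℝ)^2 + (N:ℝ)^2) / 2 := by
          have := hinv1; have := hinv3; linarith
      _ = (N:ℝ)^2 := by ring
  -- Step C : Q ≤ W and W² ≤ #(B×B) * S
  set Xr : Z × Z → ℝ := fun pq => ∑ v ∈ V.filter (fun v => v.2 = pq), (n1 v : ℝ) with hXrdef
  set Yr : Z × Z → ℝ := fun pq => ∑ v ∈ V.filter (fun v => v.2 = pq), (n3 v : ℝ) with hYrdef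
  set W : ℝ := ∑ pq ∈ B ×ˢ B, Real.sqrt (Xr pq) * Real.sqrt (Yr pq) with hWdef
  have hXr0 : ∀ pq, 0 ≤ Xr pq := fun pq =>
    Finset.sum_nonneg fun v _ => Nat.cast_nonneg _
  have hYr0 : ∀ pq, 0 ≤ Yr pq := fun pq =>
    Finset.sum_nonneg fun v _ => Nat.cast_nonneg _
  have hQW : Q ≤ W := by
    rw [hQdef, hWdef,
      ← Finset.sum_fiberwise_of_maps_to hVB (fun v => Real.sqrt ((n1 v : ℝ) * (n3 v : ℝ)))]
    refine Finset.sum_le_sum fun pq _ => ?_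
    have h := stepInner (V.filter (fun v => v.2 = pq)) n1 n3
    calc (∑ v ∈ V.filter (fun v => v.2 = pq), Real.sqrt ((n1 v : ℝ) * (n3 v : ℝ)))
        ≤ Real.sqrt (∑ v ∈ V.filter (fun v => v.2 = pq), (n1 v : ℝ))
          * Real.sqrt (∑ v ∈ V.filter (fun v => v.2 = pq), (n3 v : ℝ)) := h
      _ = Real.sqrt (Xr pq) * Real.sqrt (Yr pq) := by rw [hXrdef, hYrdef]
  have hW2 : W^2 ≤ (N:ℝ)^2 * (S.card : ℝ) := by
    have h := stepOuter (B ×ˢ B) Xr Yr hXr0 hYr0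
    have hsumXY : (∑ pq ∈ B ×ˢ B, Xr pq * Yr pq) = (S.card : ℝ) := by
      rw [hS2]
      push_cast
      refine Finset.sum_congr rfl fun pq _ => ?_
      simp only [hXrdef, hYrdef]
    have hBB : ((B ×ˢ B).card : ℝ) ≤ (N:ℝ)^2 := by
      have : (B ×ˢ B).card ≤ N * N := by
        rw [Finset.card_product]
        exact Nat.mul_le_mul hB hB
      calc ((B ×ˢ B).card : ℝ) ≤ ((N * N : ℕ) : ℝ) := by exact_mod_cast this
        _ = (N:ℝ)^2 := by push_cast; ring
    calc W^2 ≤ (∑ pq ∈ B ×ˢ B, Xr pq * Yr pq) * ((B ×ˢ B).card : ℝ) := h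
      _ = (S.card : ℝ) * ((B ×ˢ B).card : ℝ) := by rw [hsumXY]
      _ ≤ (S.card : ℝ) * (N:ℝ)^2 := by
          exact mul_le_mul_of_nonneg_left hBB (Nat.cast_nonneg _)
      _ = (N:ℝ)^2 * (S.card : ℝ) := by ring
  -- assemble
  have hQ0 : 0 ≤ Q := by
    rw [hQdef]
    exact Finset.sum_nonneg fun v _ => Real.sqrt_nonneg _
  have hI0 : 0 ≤ I := by
    rw [hIdef]
    exact Finset.sum_nonneg fun v _ => one_div_nonneg.mpr (Real.sqrt_nonneg _)
  have hn2 : ((V.card : ℝ))^2 ≤ Q * (N:ℝ)^2 := by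
    calc ((V.card : ℝ))^2 ≤ Q * I := hA2
      _ ≤ Q * (N:ℝ)^2 := mul_le_mul_of_nonneg_left hBineq hQ0
  have hfinal : ((V.card : ℝ))^4 ≤ (S.card : ℝ) * (N:ℝ)^6 := by
    have h4 : ((V.card : ℝ))^4 ≤ (Q * (N:ℝ)^2)^2 := by
      have hnn : (0:ℝ) ≤ ((V.card : ℝ))^2 := sq_nonneg _
      calc ((V.card : ℝ))^4 = (((V.card : ℝ))^2)^2 := by ring
        _ ≤ (Q * (N:ℝ)^2)^2 := by
            apply pow_le_pow_left₀ hnn hn2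
    have hQW2 : Q^2 ≤ W^2 := by
      apply pow_le_pow_left₀ hQ0 hQW
    calc ((V.card : ℝ))^4 ≤ (Q * (N:ℝ)^2)^2 := h4
      _ = Q^2 * ((N:ℝ)^2)^2 := by ring
      _ ≤ W^2 * ((N:ℝ)^2)^2 := by
          exact mul_le_mul_of_nonneg_right hQW2 (sq_nonneg _)
      _ ≤ ((N:ℝ)^2 * (S.card : ℝ)) * ((N:ℝ)^2)^2 := by
          exact mul_le_mul_of_nonneg_right hW2 (sq_nonneg _)
      _ = (S.card : ℝ) * (N:ℝ)^6 := by ring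
  exact_mod_cast hfinal
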